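/- Let M, N be symmetric ℓ×ℓ real matrices. Then xᵀMx > 0 for all nonzero x ∈ ℝ^ℓ with xᵀNx = 0 if and only if there exists α ∈ ℝ such that M − αN is positive definite. -/

import Mathlib

open Matrix
private def qf {l : ℕ} (P : Matrix (Fin l) (Fin l) ℝ) (x : Fin l → ℝ) : ℝ := x ⬝ᵥ (P *ᵥ x)

private lemma root_quad (a b c s : ℝ) (ha : a ≠ 0) (hs : s ^ 2 = b ^ 2 - 4 * (a * c)) :
    c + ((-b - s) / (2 * a)) * b + ((-b - s) / (2 * a)) ^ 2 * a = 0 ∧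
    c + ((-b + s) / (2 * a)) * b + ((-b + s) / (2 * a)) ^ 2 * a = 0 := by
  constructor <;> (field_simp; linear_combination hs)

private lemma quad_sep (fx fy gx gy cM cN : ℝ) (hx : gx < 0) (hy : 0 < gy)
    (key : ∀ t : ℝ, gy + t * cN + t ^ 2 * gx = 0 → 0 < fy + t * cM + t ^ 2 * fx) :
    fy * gx < fx * gy := by
  by_contra hcon
  push_neg at hcon
  have hgy0 : gy ≠ 0 := ne_of_gt hy
  have hgx0 : gx ≠ 0 := ne_of_lt hx
  set α := fy / gy with hα
  have hFy : fy - α * gy = 0 := by rw [hα]; field_simp; ring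
  have hFx : fx - α * gx ≤ 0 := by
    rw [sub_nonpos, hα, div_mul_eq_mul_div, le_div_iff₀ hy]
    linarith
  have hdisc : 0 < cN ^ 2 - 4 * (gx * gy) :=
    by nlinarith [sq_nonneg cN, mul_neg_of_neg_of_pos hx hy]
  set s := Real.sqrt (cN ^ 2 - 4 * (gx * gy)) with hs
  have hs2 : s ^ 2 = cN ^ 2 - 4 * (gx * gy) := Real.sq_sqrt hdisc.le
  have hs0 : 0 ≤ s := Real.sqrt_nonneg _
  have h1 : cN < s := by nlinarith [mul_neg_of_neg_of_pos hx hy]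
  have h2 : -cN < s := by nlinarith [mul_neg_of_neg_of_pos hx hy]
  obtain ⟨hrp, hrm⟩ := root_quad gx cN gy s hgx0 hs2
  set tp := (-cN - s) / (2 * gx) with htpdef
  set tm := (-cN + s) / (2 * gx) with htmdef
  have htp : 0 < tp := div_pos_of_neg_of_neg (by linarith) (by linarith)
  have htm : tm < 0 := div_neg_of_pos_of_neg (by linarith) (by linarith)
  have key2 : ∀ t : ℝ, gy + t * cN + t ^ 2 * gx = 0 →
      0 < t * ((cM - α * cN) + t * (fx - α * gx)) := by
    intro t ht
    have e : fy + t * cM + t ^ 2 * fx = t * ((cM - α * cN) + t * (fx - α * gx)) := by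
      linear_combination hFy + α * ht
    linarith [key t ht, e.symm.le, e.le]
  have Pp := key2 tp hrp
  have Pm := key2 tm hrm
  have hA : 0 < (cM - α * cN) + tp * (fx - α * gx) := by
    rcases mul_pos_iff.mp Pp with ⟨_, h⟩ | ⟨h, _⟩
    · exact h
    · linarith
  have hB : (cM - α * cN) + tm * (fx - α * gx) < 0 := by
    rcases mul_pos_iff.mp Pm with ⟨h, _⟩ | ⟨_, h⟩
    · linarith
    · exact h
  nlinarith [mul_nonpos_of_nonneg_of_nonpos (by linarith : (0:ℝ) ≤ tp - tm) hFx]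
private lemma qf_expand {l : ℕ} (P : Matrix (Fin l) (Fin l) ℝ) (x y : Fin l → ℝ) (t : ℝ) :
    qf P (y + t • x) = qf P y + t * (y ⬝ᵥ (P *ᵥ x) + x ⬝ᵥ (P *ᵥ y)) + t ^ 2 * qf P x := by
  simp only [qf, Matrix.mulVec_add, Matrix.mulVec_smul, dotProduct_add, add_dotProduct,
    dotProduct_smul, smul_dotProduct, smul_eq_mul]
  ring

private lemma qf_smul {l : ℕ} (P : Matrix (Fin l) (Fin l) ℝ) (x : Fin l → ℝ) (c : ℝ) :
    qf P (c • x) = c ^ 2 * qf P x := by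
  simp only [qf, Matrix.mulVec_smul, dotProduct_smul, smul_dotProduct, smul_eq_mul]
  ring

private lemma qf_cont {l : ℕ} (P : Matrix (Fin l) (Fin l) ℝ) : Continuous (qf P) := by
  have : qf P = fun x => ∑ i, x i * ∑ j, P i j * x j := by
    funext x; simp [qf, dotProduct, Matrix.mulVec]
  rw [this]
  fun_prop

private lemma qf_neg {l : ℕ} (P : Matrix (Fin l) (Fin l) ℝ) (x : Fin l → ℝ) :
    qf (-P) x = -qf P x := by
  simp [qf, Matrix.neg_mulVec]

private lemma finsler_pairwise {l : ℕ} (M N : Matrix (Fin l) (Fin l) ℝ)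
    (H : ∀ x : Fin l → ℝ, x ≠ 0 → qf N x = 0 → 0 < qf M x)
    {x y : Fin l → ℝ} (hx : qf N x < 0) (hy : 0 < qf N y) :
    qf M y * qf N x < qf M x * qf N y := by
  apply quad_sep _ _ _ _ (y ⬝ᵥ (M *ᵥ x) + x ⬝ᵥ (M *ᵥ y)) (y ⬝ᵥ (N *ᵥ x) + x ⬝ᵥ (N *ᵥ y)) hx hy
  intro t ht
  have hz0 : qf N (y + t • x) = 0 := by rw [qf_expand]; linarith
  have hzne : y + t • x ≠ 0 := by
    intro h0
    have hyx : y = (-t) • x := by rw [neg_smul]; exact eq_neg_of_add_eq_zero_left h0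
    have h2 : qf N y = t ^ 2 * qf N x := by rw [hyx, qf_smul]; ring
    nlinarith
  have hfz := H _ hzne hz0
  rw [qf_expand] at hfz
  linarith

/-- attainment of the minimal ratio `qf M u / qf N u` over unit `u` with `qf N u > 0`. -/
private lemma exists_min {l : ℕ} (M N : Matrix (Fin l) (Fin l) ℝ)
    (H : ∀ x : Fin l → ℝ, x ≠ 0 → qf N x = 0 → 0 < qf M x)
    {w : Fin l → ℝ} (hw1 : ‖w‖ = 1) (hw2 : 0 < qf N w) :
    ∃ v : Fin l → ℝ, ‖v‖ = 1 ∧ 0 < qf N v ∧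
      ∀ u : Fin l → ℝ, ‖u‖ = 1 → 0 < qf N u → qf M v / qf N v ≤ qf M u / qf N u := by
  set b := qf M w / qf N w with hb
  set K := {u : Fin l → ℝ | ‖u‖ = 1 ∧ (0 ≤ qf N u ∧ qf M u ≤ b * qf N u)} with hK
  have hKc : IsClosed K := by
    rw [hK, Set.setOf_and, Set.setOf_and]
    exact (isClosed_eq continuous_norm continuous_const).inter
      ((isClosed_le continuous_const (qf_cont N)).inter
        (isClosed_le (qf_cont M) (continuous_const.mul (qf_cont N))))
  have hKcomp : IsCompact K :=
    (isCompact_sphere (0 : Fin l → ℝ) 1).of_isClosed_subset hKc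
      (fun u hu => mem_sphere_zero_iff_norm.mpr hu.1)
  have hwK : w ∈ K := by
    refine ⟨hw1, hw2.le, le_of_eq ?_⟩
    rw [hb, div_mul_cancel₀ _ (ne_of_gt hw2)]
  have hKpos : ∀ u ∈ K, 0 < qf N u := by
    intro u hu
    rcases hu.2.1.lt_or_eq with h | h
    · exact h
    · exfalso
      have hune : u ≠ 0 := by
        intro h0
        have h1 := hu.1
        rw [h0] at h1; simp at h1
      have hpos := H u hune h.symm
      have hle := hu.2.2
      rw [← h] at hle
      simp at hle
      linarith
  have hcont : ContinuousOn (fun u => qf M u / qf N u) K :=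
    (qf_cont M).continuousOn.div (qf_cont N).continuousOn
      (fun u hu => ne_of_gt (hKpos u hu))
  obtain ⟨v, hvK, hvmin'⟩ := hKcomp.exists_isMinOn ⟨w, hwK⟩ hcont
  have hvmin := isMinOn_iff.mp hvmin'
  refine ⟨v, hvK.1, hKpos v hvK, ?_⟩
  intro u hu1 hu2
  by_cases huK : u ∈ K
  · exact hvmin u huK
  · have hub : b * qf N u < qf M u := by
      by_contra hc
      push_neg at hc
      exact huK ⟨hu1, hu2.le, hc⟩
    have h1 : qf M v / qf N v ≤ b := by
      have := hvmin w hwK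
      rwa [← hb] at this
    have h2 : b < qf M u / qf N u := (lt_div_iff₀ hu2).mpr (by linarith)
    linarith

/-- Classical strict Finsler's lemma (Proposition 5). -/
theorem strict_finsler {l : ℕ}
    (M N : Matrix (Fin l) (Fin l) ℝ)
    (hM : Mᵀ = M) (hN : Nᵀ = N) :
    (∀ x : Fin l → ℝ, x ≠ 0 → x ⬝ᵥ (N *ᵥ x) = 0 → 0 < x ⬝ᵥ (M *ᵥ x)) ↔
      ∃ α : ℝ, (M - α • N).PosDef := by
  constructor
  · intro H
    have H' : ∀ x : Fin l → ℝ, x ≠ 0 → qf N x = 0 → 0 < qf M x := H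
    -- key claim: a uniform α on the unit sphere
    have key : ∃ α : ℝ, ∀ u : Fin l → ℝ, ‖u‖ = 1 → α * qf N u < qf M u := by
      by_cases hp : ∃ w : Fin l → ℝ, ‖w‖ = 1 ∧ 0 < qf N w
      · obtain ⟨w₁, hw1, hw2⟩ := hp
        obtain ⟨v₁, hv11, hv12, hv13⟩ := exists_min M N H' hw1 hw2
        set B := qf M v₁ / qf N v₁ with hB
        by_cases hn : ∃ w : Fin l → ℝ, ‖w‖ = 1 ∧ qf N w < 0
        · -- both signs occur
          obtain ⟨w₀, hw01, hw02⟩ := hn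
          have H'' : ∀ x : Fin l → ℝ, x ≠ 0 → qf (-N) x = 0 → 0 < qf M x := by
            intro x hx h
            rw [qf_neg] at h
            exact H' x hx (by linarith)
          have hw02' : 0 < qf (-N) w₀ := by rw [qf_neg]; linarith
          obtain ⟨v₀, hv01, hv02, hv03⟩ := exists_min M (-N) H'' hw01 hw02'
          rw [qf_neg] at hv02
          have hv02' : qf N v₀ < 0 := by linarith
          set A := qf M v₀ / qf N v₀ with hA
          have hmax : ∀ u : Fin l → ℝ, ‖u‖ = 1 → qf N u < 0 → qf M u / qf N u ≤ A := by
            intro u hu1 hu2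
            have := hv03 u hu1 (by rw [qf_neg]; linarith)
            rw [qf_neg, qf_neg, div_neg, div_neg] at this
            rw [hA]
            linarith
          have hpair := finsler_pairwise M N H' hv02' hv12
          have hAB : A < B := by
            by_contra hBA
            push_neg at hBA
            have e0 : A * qf N v₀ = qf M v₀ := div_mul_cancel₀ _ (ne_of_lt hv02')
            have e1 : B * qf N v₁ = qf M v₁ := div_mul_cancel₀ _ (ne_of_gt hv12)
            have h2 : (B - A) * (qf N v₀ * qf N v₁) < 0 := by
              have he : (B - A) * (qf N v₀ * qf N v₁)
                  = qf M v₁ * qf N v₀ - qf M v₀ * qf N v₁ := by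
                linear_combination (qf N v₀) * e1 - (qf N v₁) * e0
              rw [he]; linarith
            have h3 : 0 ≤ (A - B) * (-(qf N v₀ * qf N v₁)) :=
              mul_nonneg (by linarith) (by linarith [mul_neg_of_neg_of_pos hv02' hv12])
            have h4 : (A - B) * (-(qf N v₀ * qf N v₁)) = (B - A) * (qf N v₀ * qf N v₁) := by
              ring
            linarith
          refine ⟨(A + B) / 2, ?_⟩
          intro u hu
          rcases lt_trichotomy (qf N u) 0 with h | h | h
          · have hr : qf M u / qf N u ≤ A := hmax u hu h
            have : qf M u / qf N u < (A + B) / 2 := by linarith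
            rw [div_lt_iff_of_neg h] at this
            linarith
          · have hune : u ≠ 0 := by intro h0; rw [h0] at hu; simp at hu
            have := H' u hune h
            rw [h]
            linarith
          · have hr : B ≤ qf M u / qf N u := hv13 u hu h
            have : (A + B) / 2 < qf M u / qf N u := by linarith
            rw [lt_div_iff₀ h] at this
            linarith
        · -- only positive values occur
          push_neg at hn
          refine ⟨B - 1, ?_⟩
          intro u hu
          rcases lt_trichotomy (qf N u) 0 with h | h | h
          · exact absurd h (not_lt.mpr (hn u hu))
          · have hune : u ≠ 0 := by intro h0; rw [h0] at hu; simp at hu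
            have := H' u hune h
            rw [h]
            linarith
          · have hr : B ≤ qf M u / qf N u := hv13 u hu h
            have : B - 1 < qf M u / qf N u := by linarith
            rw [lt_div_iff₀ h] at this
            linarith
      · by_cases hn : ∃ w : Fin l → ℝ, ‖w‖ = 1 ∧ qf N w < 0
        · -- only negative values occur
          obtain ⟨w₀, hw01, hw02⟩ := hn
          have H'' : ∀ x : Fin l → ℝ, x ≠ 0 → qf (-N) x = 0 → 0 < qf M x := by
            intro x hx h
            rw [qf_neg] at h
            exact H' x hx (by linarith)
          have hw02' : 0 < qf (-N) w₀ := by rw [qf_neg]; linarith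
          obtain ⟨v₀, hv01, hv02, hv03⟩ := exists_min M (-N) H'' hw01 hw02'
          rw [qf_neg] at hv02
          have hv02' : qf N v₀ < 0 := by linarith
          set A := qf M v₀ / qf N v₀ with hA
          have hmax : ∀ u : Fin l → ℝ, ‖u‖ = 1 → qf N u < 0 → qf M u / qf N u ≤ A := by
            intro u hu1 hu2
            have := hv03 u hu1 (by rw [qf_neg]; linarith)
            rw [qf_neg, qf_neg, div_neg, div_neg] at this
            rw [hA]
            linarith
          push_neg at hp
          refine ⟨A + 1, ?_⟩
          intro u hu
          rcases lt_trichotomy (qf N u) 0 with h | h | h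
          · have hr : qf M u / qf N u ≤ A := hmax u hu h
            have : qf M u / qf N u < A + 1 := by linarith
            rw [div_lt_iff_of_neg h] at this
            linarith
          · have hune : u ≠ 0 := by intro h0; rw [h0] at hu; simp at hu
            have := H' u hune h
            rw [h]
            linarith
          · exact absurd h (not_lt.mpr (hp u hu))
        · -- qf N vanishes identically on the sphere
          push_neg at hp hn
          refine ⟨0, ?_⟩
          intro u hu
          have h : qf N u = 0 := le_antisymm (hp u hu) (hn u hu)
          have hune : u ≠ 0 := by intro h0; rw [h0] at hu; simp at hu
          have := H' u hune h
          rw [h]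
          linarith
    obtain ⟨α, hkey⟩ := key
    refine ⟨α, Matrix.PosDef.of_dotProduct_mulVec_pos ?_ ?_⟩
    · -- Hermitian
      rw [Matrix.IsHermitian, Matrix.conjTranspose_eq_transpose_of_trivial,
        Matrix.transpose_sub, Matrix.transpose_smul, hM, hN]
    · intro x hx
      have hc : (0:ℝ) < ‖x‖ := norm_pos_iff.mpr hx
      obtain ⟨u, hun, hxu⟩ : ∃ u : Fin l → ℝ, ‖u‖ = 1 ∧ x = ‖x‖ • u := by
        refine ⟨(‖x‖)⁻¹ • x, ?_, ?_⟩
        · rw [norm_smul, Real.norm_eq_abs, abs_of_pos (inv_pos.mpr hc), inv_mul_cancel₀ hc.ne']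
        · rw [smul_inv_smul₀ hc.ne']
      have h1 := hkey u hun
      have e1 : qf M x = ‖x‖ ^ 2 * qf M u := by
        rw [show qf M x = qf M (‖x‖ • u) from by rw [← hxu], qf_smul]
      have e2 : qf N x = ‖x‖ ^ 2 * qf N u := by
        rw [show qf N x = qf N (‖x‖ • u) from by rw [← hxu], qf_smul]
      have h2 : 0 < qf M x - α * qf N x := by
        rw [e1, e2]
        nlinarith [mul_pos (pow_pos hc 2) (sub_pos.mpr h1)]
      have hexp : x ⬝ᵥ ((M - α • N) *ᵥ x) = qf M x - α * qf N x := by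
        simp [qf, Matrix.sub_mulVec, Matrix.smul_mulVec, dotProduct_sub, dotProduct_smul,
          smul_eq_mul]
      simp only [star_trivial]
      rw [hexp]
      exact h2
  · rintro ⟨α, hα⟩ x hx hNx
    have h := Matrix.PosDef.dotProduct_mulVec_pos hα hx
    simp only [star_trivial] at h
    rw [show x ⬝ᵥ ((M - α • N) *ᵥ x) = x ⬝ᵥ (M *ᵥ x) - α * (x ⬝ᵥ (N *ᵥ x)) from by
      simp [Matrix.sub_mulVec, Matrix.smul_mulVec, dotProduct_sub, dotProduct_smul,
        smul_eq_mul], hNx] at h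
    linarith
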